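/- The relation ≤_L on admissible labelings of a JSBAF, defined by L₁ ≤_L L₂ iff in(L₁) ⊆ in(L₂) and out(L₁) ⊆ out(L₂), is a partial order, and for any two admissible labelings L₁, L₂ with in(L₁) ⊆ in(L₂), one has out(L₁) ⊆ out(L₂). -/
import Mathlib


namespace JS

inductive Lab : Type
  | IN | OUT | UNDEC
deriving DecidableEq

structure JSBAF (A : Type) where
  att : A → A → Prop
  supp : Set A → A → Prop
  pref : A → A → Prop

variable {A : Type}

/-- Strict arguments: supported by the empty set or only by strict arguments. -/
inductive Strict (J : JSBAF A) : A → Prop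
  | mk (S : Set A) (a : A) (h : J.supp S a) (hS : ∀ b ∈ S, Strict J b) : Strict J a

/-- Structural restrictions on JSBAFs. -/
structure Restr (J : JSBAF A) : Prop where
  finSupp : ∀ S b, J.supp S b → S.Finite
  uniqSupp : ∀ S S' b, J.supp S b → J.supp S' b → S = S'
  acyc : ∀ a, ¬ Relation.TransGen (fun x y => ∃ S, J.supp S y ∧ x ∈ S) a a
  strictUnatt : ∀ a b, Strict J b → ¬ J.att a b
  prefRefl : ∀ a, J.pref a a
  prefTrans : ∀ a b c, J.pref a b → J.pref b c → J.pref a c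
  prefTotal : ∀ a b, J.pref a b ∨ J.pref b a
  strictEq : ∀ a b, Strict J a → Strict J b → J.pref a b
  strictTop : ∀ a b, ¬ Strict J a → Strict J b → J.pref a b ∧ ¬ J.pref b a

def inL (L : A → Lab) : Set A := {a | L a = Lab.IN}
def outL (L : A → Lab) : Set A := {a | L a = Lab.OUT}
def undecL (L : A → Lab) : Set A := {a | L a = Lab.UNDEC}

/-- Definition 2, item 1: legally IN. -/
def legallyIn (J : JSBAF A) (L : A → Lab) (a : A) : Prop :=
  (∀ b, J.att b a → L b = Lab.OUT) ∧
  ∀ S c, J.supp S c → a ∈ S → (∀ b ∈ S, b ≠ a → J.pref a b) →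
    (L c = Lab.IN ∨
     (L c = Lab.UNDEC ∧ ∃ b ∈ S, b ≠ a ∧ (L b = Lab.OUT ∨ L b = Lab.UNDEC)) ∨
     (L c = Lab.OUT ∧
       ((∃ b ∈ S, b ≠ a ∧ L b = Lab.OUT) ∨
        (∃ b₁ ∈ S, ∃ b₂ ∈ S, b₁ ≠ a ∧ b₂ ≠ a ∧ b₁ ≠ b₂ ∧
          L b₁ = Lab.UNDEC ∧ L b₂ = Lab.UNDEC))))

/-- Definition 2, item 2: legally OUT. -/
def legallyOut (J : JSBAF A) (L : A → Lab) (a : A) : Prop :=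
  (∃ b, J.att b a ∧ L b = Lab.IN) ∨
  (∃ (n : ℕ) (S : ℕ → Set A) (b : ℕ → A),
    (∀ i ≤ n, J.supp (S i) (b i)) ∧
    (∀ i < n, b i ∈ S (i + 1)) ∧
    a ∈ S 0 ∧
    (∀ d ∈ S 0, d ≠ a → L d = Lab.IN) ∧
    (∃ c, J.att c (b n) ∧ L c = Lab.IN) ∧
    (∀ i ≤ n, L (b i) = Lab.OUT) ∧
    (∀ i, 1 ≤ i → i ≤ n → ∀ d ∈ S i, d ≠ b (i - 1) → L d = Lab.IN) ∧
    (∀ d ∈ S 0, d ≠ a → J.pref a d))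

/-- Admissible labelings. -/
def Admissible (J : JSBAF A) (L : A → Lab) : Prop :=
  (∀ a, L a = Lab.IN → legallyIn J L a) ∧
  (∀ a, L a = Lab.OUT ↔ legallyOut J L a) ∧
  (∀ a, Strict J a → L a = Lab.IN)

/-- Preferred labelings: maximal admissible w.r.t. inclusion of IN-sets. -/
def Preferred (J : JSBAF A) (L : A → Lab) : Prop :=
  Admissible J L ∧ ∀ L', Admissible J L' → ¬ (inL L ⊂ inL L')

/-- The iterated OUT-sets of the SIM labeling. -/
def simO (J : JSBAF A) : ℕ → Set A
  | 0 => {a | ∃ b, Strict J b ∧ J.att b a}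
  | n + 1 => simO J n ∪
      {a | ∃ S c, J.supp S c ∧ a ∈ S ∧ c ∈ simO J n ∧ ∀ d ∈ S, d ≠ a → Strict J d}

def simIn (J : JSBAF A) : Set A := {a | Strict J a}
def simOut (J : JSBAF A) : Set A := ⋃ n, simO J n

open Classical in
/-- The strict-including-minimal labeling. -/
noncomputable def SIM (J : JSBAF A) : A → Lab := fun a =>
  if Strict J a then Lab.IN else if a ∈ simOut J then Lab.OUT else Lab.UNDEC

/-- The order on labelings. -/
def leL (L₁ L₂ : A → Lab) : Prop := inL L₁ ⊆ inL L₂ ∧ outL L₁ ⊆ outL L₂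

end JS

open JS

namespace JSaux

variable {A : Type}

/-- A finite nonempty set has a pref-minimal element (pref is a total preorder). -/
lemma exists_min (J : JSBAF A) (hR : Restr J) {S : Set A} (hfin : S.Finite)
    {x : A} (hx : x ∈ S) : ∃ m ∈ S, ∀ d ∈ S, J.pref m d := by
  classical
  have key : ∀ T : Finset A, T.Nonempty → ∃ m ∈ T, ∀ d ∈ T, J.pref m d := by
    intro T
    induction T using Finset.induction_on with
    | empty => rintro ⟨y, hy⟩; exact absurd hy (Finset.notMem_empty y)
    | @insert a T ha ih =>
      intro _
      rcases T.eq_empty_or_nonempty with rfl | hT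
      · exact ⟨a, Finset.mem_insert_self a _, by
          intro d hd
          rcases Finset.mem_insert.mp hd with rfl | hd
          · exact hR.prefRefl d
          · exact absurd hd (Finset.notMem_empty d)⟩
      · obtain ⟨m, hm, hmin⟩ := ih hT
        rcases hR.prefTotal m a with hma | ham
        · refine ⟨m, Finset.mem_insert_of_mem hm, ?_⟩
          intro d hd
          rcases Finset.mem_insert.mp hd with rfl | hd
          · exact hma
          · exact hmin d hd
        · refine ⟨a, Finset.mem_insert_self a _, ?_⟩
          intro d hd
          rcases Finset.mem_insert.mp hd with rfl | hd
          · exact hR.prefRefl d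
          · exact hR.prefTrans a m d ham (hmin d hd)
  obtain ⟨m, hm, hmin⟩ := key hfin.toFinset ⟨x, hfin.mem_toFinset.mpr hx⟩
  exact ⟨m, hfin.mem_toFinset.mp hm, fun d hd => hmin d (hfin.mem_toFinset.mpr hd)⟩

/-- Key lemma: along a legallyOut chain of L₁, every b i is OUT in L₂. -/
lemma chain_out (J : JSBAF A) (hR : Restr J) (L₁ L₂ : A → Lab)
    (h1 : Admissible J L₁) (h2 : Admissible J L₂) (hin : inL L₁ ⊆ inL L₂)
    (n : ℕ) (S : ℕ → Set A) (b : ℕ → A)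
    (hsupp : ∀ i ≤ n, J.supp (S i) (b i))
    (hmem : ∀ i < n, b i ∈ S (i + 1))
    (hatt : ∃ c, J.att c (b n) ∧ L₁ c = Lab.IN)
    (hinner : ∀ i, 1 ≤ i → i ≤ n → ∀ d ∈ S i, d ≠ b (i - 1) → L₁ d = Lab.IN) :
    ∀ i ≤ n, L₂ (b i) = Lab.OUT := by
  obtain ⟨c, hc, hcIn⟩ := hatt
  have hcIn2 : L₂ c = Lab.IN := hin hcIn
  have key : ∀ k, k ≤ n → L₂ (b (n - k)) = Lab.OUT := by
    intro k
    induction k using Nat.strong_induction_on with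
    | _ k IH =>
      intro hk
      rcases Nat.eq_zero_or_pos k with rfl | hpos
      · -- base case: b n is attacked by c which is IN in L₂
        simp only [Nat.sub_zero]
        exact (h2.2.1 (b n)).mpr (Or.inl ⟨c, hc, hcIn2⟩)
      · set i := n - k with hidef
        have hi : i < n := by omega
        have hOUTgt : ∀ j, i < j → j ≤ n → L₂ (b j) = Lab.OUT := by
          intro j hji hjn
          have := IH (n - j) (by omega) (by omega)
          rwa [show n - (n - j) = j by omega] at this
        have hsuppS : J.supp (S (i + 1)) (b (i + 1)) := hsupp (i + 1) (by omega)
        have hbiS : b i ∈ S (i + 1) := hmem i hi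
        have hSIn : ∀ d ∈ S (i + 1), d ≠ b i → L₁ d = Lab.IN := by
          intro d hd hne
          exact hinner (i + 1) (by omega) (by omega) d hd (by simpa using hne)
        have hSIn2 : ∀ d ∈ S (i + 1), d ≠ b i → L₂ d = Lab.IN := by
          intro d hd hne
          exact hin (hSIn d hd hne)
        obtain ⟨m, hmS, hmin⟩ :=
          exists_min J hR (hR.finSupp _ _ hsuppS) hbiS
        by_cases hm : m = b i
        · -- b i is pref-minimal in its set: build a sub-chain witness
          subst hm
          refine (h2.2.1 (b i)).mpr (Or.inr
            ⟨n - (i + 1), fun j => S (i + 1 + j), fun j => b (i + 1 + j),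
              ?_, ?_, ?_, ?_, ?_, ?_, ?_, ?_⟩)
          · intro j hj; exact hsupp (i + 1 + j) (by omega)
          · intro j hj
            have := hmem (i + 1 + j) (by omega)
            rwa [show i + 1 + j + 1 = i + 1 + (j + 1) by omega] at this
          · simpa using hbiS
          · intro d hd hne
            simp only [Nat.add_zero] at hd
            exact hSIn2 d hd (by simpa using hne)
          · show ∃ c', J.att c' (b (i + 1 + (n - (i + 1)))) ∧ L₂ c' = Lab.IN
            rw [show i + 1 + (n - (i + 1)) = n by omega]
            exact ⟨c, hc, hcIn2⟩
          · intro j hj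
            exact hOUTgt (i + 1 + j) (by omega) (by omega)
          · intro j hj1 hjn d hd hne
            have hne' : d ≠ b (i + 1 + (j - 1)) := hne
            refine hin (hinner (i + 1 + j) (by omega) (by omega) d hd ?_)
            rw [show i + 1 + j - 1 = i + 1 + (j - 1) by omega]
            exact hne'
          · intro d hd hne
            simp only [Nat.add_zero] at hd
            exact hmin d hd
        · -- m ≠ b i is IN in L₂; use legallyIn of m
          have hmIn2 : L₂ m = Lab.IN := hSIn2 m hmS hm
          have hleg := (h2.1 m hmIn2).2 (S (i + 1)) (b (i + 1)) hsuppS hmS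
            (fun d hd _ => hmin d hd)
          have hb1out : L₂ (b (i + 1)) = Lab.OUT := hOUTgt (i + 1) (by omega) (by omega)
          rcases hleg with h | ⟨h, _⟩ | ⟨_, h⟩
          · rw [hb1out] at h; exact absurd h (by simp)
          · rw [hb1out] at h; exact absurd h (by simp)
          · rcases h with ⟨d, hd, hne, hdout⟩ | ⟨d₁, hd₁, d₂, hd₂, hne₁, hne₂, hne12, hu₁, hu₂⟩
            · by_cases hdb : d = b i
              · rw [← hdb]; exact hdout
              · rw [hSIn2 d hd hdb] at hdout; exact absurd hdout (by simp)
            · have e₁ : d₁ = b i := by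
                by_contra h'
                rw [hSIn2 d₁ hd₁ h'] at hu₁; exact absurd hu₁ (by simp)
              have e₂ : d₂ = b i := by
                by_contra h'
                rw [hSIn2 d₂ hd₂ h'] at hu₂; exact absurd hu₂ (by simp)
              exact absurd (e₁.trans e₂.symm) hne12
  intro i hi
  have := key (n - i) (by omega)
  rwa [show n - (n - i) = i by omega] at this

end JSaux


open JS in
/-- The relation ≤_L on admissible labelings (inclusion of IN-sets and of OUT-sets)
is a partial order, and for admissible labelings, inclusion of IN-sets already implies inclusion
of OUT-sets. -/
theorem leL_partialOrder {A : Type} (J : JSBAF A) (hR : Restr J) :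
    (∀ L : A → Lab, Admissible J L → leL L L) ∧
    (∀ L₁ L₂ L₃ : A → Lab, Admissible J L₁ → Admissible J L₂ → Admissible J L₃ →
      leL L₁ L₂ → leL L₂ L₃ → leL L₁ L₃) ∧
    (∀ L₁ L₂ : A → Lab, Admissible J L₁ → Admissible J L₂ →
      leL L₁ L₂ → leL L₂ L₁ → L₁ = L₂) ∧
    (∀ L₁ L₂ : A → Lab, Admissible J L₁ → Admissible J L₂ →
      inL L₁ ⊆ inL L₂ → outL L₁ ⊆ outL L₂) := by
  have main : ∀ L₁ L₂ : A → Lab, Admissible J L₁ → Admissible J L₂ →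
      inL L₁ ⊆ inL L₂ → outL L₁ ⊆ outL L₂ := by
    intro L₁ L₂ h1 h2 hin a ha
    have haOut : L₁ a = Lab.OUT := ha
    have hleg : legallyOut J L₁ a := (h1.2.1 a).mp haOut
    show L₂ a = Lab.OUT
    rcases hleg with ⟨c, hc, hcIn⟩ | ⟨n, S, b, hsupp, hmem, haS, hS0, hatt, hbout, hinner, hpref⟩
    · exact (h2.2.1 a).mpr (Or.inl ⟨c, hc, hin hcIn⟩)
    · have hbout2 : ∀ i ≤ n, L₂ (b i) = Lab.OUT :=
        JSaux.chain_out J hR L₁ L₂ h1 h2 hin n S b hsupp hmem hatt hinner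
      refine (h2.2.1 a).mpr (Or.inr ⟨n, S, b, hsupp, hmem, haS,
        fun d hd hne => hin (hS0 d hd hne), ?_, hbout2,
        fun i h1i hiN d hd hne => hin (hinner i h1i hiN d hd hne), hpref⟩)
      obtain ⟨c, hc, hcIn⟩ := hatt
      exact ⟨c, hc, hin hcIn⟩
  refine ⟨fun L _ => ⟨subset_rfl, subset_rfl⟩,
    fun L₁ L₂ L₃ _ _ _ h12 h23 => ⟨h12.1.trans h23.1, h12.2.trans h23.2⟩,
    ?_, main⟩
  intro L₁ L₂ h1 h2 h12 h21
  funext a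
  rcases h1a : L₁ a with _ | _ | _ <;> rcases h2a : L₂ a with _ | _ | _ <;> try rfl
  · exact absurd (h12.1 (show a ∈ inL L₁ from h1a)) (by simp [inL, h2a])
  · exact absurd (h12.1 (show a ∈ inL L₁ from h1a)) (by simp [inL, h2a])
  · exact absurd (h12.2 (show a ∈ outL L₁ from h1a)) (by simp [outL, h2a])
  · exact absurd (h12.2 (show a ∈ outL L₁ from h1a)) (by simp [outL, h2a])
  · exact absurd (h21.1 (show a ∈ inL L₂ from h2a)) (by simp [inL, h1a])
  · exact absurd (h21.2 (show a ∈ outL L₂ from h2a)) (by simp [outL, h1a])
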